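/- Let H be a real Hilbert space, C ⊆ H nonempty closed convex, f : C × C → ℝ pseudomonotone with f(x,x)=0, and suppose sequences (x_n), (y_n) in C and positive reals (λ_n), with λ_n → λ > 0 and μ ∈ (0,1), satisfy for every y ∈ C and n: ‖x_{n+1} - y‖² ≤ ‖x_n - y‖² - (1 - μλ_n/λ_{n+1})‖x_n - y_n‖² - (1 - μλ_n/λ_{n+1})‖x_{n+1} - y_n‖² + 2λ_n f(y_n, y). Then for any solution p of the equilibrium problem (f(p,y) ≥ 0 for all y ∈ C), taking y = p gives ‖x_{n+1} - p‖² ≤ ‖x_n - p‖² - (1 - μλ_n/λ_{n+1})(‖x_n - y_n‖² + ‖x_{n+1} - y_n‖²), and for all n large enough (with κ ∈ (0, 1-μ) fixed): ‖x_{n+1} - p‖² ≤ ‖x_n - p‖² - κ(‖x_n - y_n‖² + ‖x_{n+1} - y_n‖²); consequently (‖x_n - p‖) converges, (x_n) is bounded, and ‖x_n - y_n‖ → 0 and ‖x_{n+1} - y_n‖ → 0. -/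
import Mathlib


open Filter

/-- Key convergence estimates for the extragradient algorithm (Euclidean version of the
main inequality (3.8)): Fejér-type monotonicity with respect to a solution `p`,
convergence of `‖x_n - p‖`, boundedness of `(x_n)`, and vanishing of
`‖x_n - y_n‖` and `‖x_{n+1} - y_n‖`. -/
theorem extragradient_key_estimates
    {H : Type*} [NormedAddCommGroup H] [InnerProductSpace ℝ H] [CompleteSpace H]
    (C : Set H) (hCne : C.Nonempty) (hCclosed : IsClosed C) (hCconv : Convex ℝ C)
    (f : H → H → ℝ) (hf0 : ∀ x ∈ C, f x x = 0)
    (hpseudo : ∀ x ∈ C, ∀ y ∈ C, 0 ≤ f x y → f y x ≤ 0)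
    (x y : ℕ → H) (hx : ∀ n, x n ∈ C) (hy : ∀ n, y n ∈ C)
    (lam : ℕ → ℝ) (hlampos : ∀ n, 0 < lam n) (hlammono : ∀ n, lam (n + 1) ≤ lam n)
    (l : ℝ) (hl : 0 < l) (hlamconv : Tendsto lam atTop (nhds l))
    (μ : ℝ) (hμ : μ ∈ Set.Ioo (0 : ℝ) 1)
    (hkey : ∀ z ∈ C, ∀ n : ℕ,
      ‖x (n + 1) - z‖ ^ 2 ≤ ‖x n - z‖ ^ 2
        - (1 - μ * lam n / lam (n + 1)) * ‖x n - y n‖ ^ 2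
        - (1 - μ * lam n / lam (n + 1)) * ‖x (n + 1) - y n‖ ^ 2
        + 2 * lam n * f (y n) z)
    (p : H) (hp : p ∈ C) (hsol : ∀ z ∈ C, 0 ≤ f p z)
    (κ : ℝ) (hκ : κ ∈ Set.Ioo 0 (1 - μ)) :
    (∀ n : ℕ, ‖x (n + 1) - p‖ ^ 2 ≤ ‖x n - p‖ ^ 2
        - (1 - μ * lam n / lam (n + 1)) * (‖x n - y n‖ ^ 2 + ‖x (n + 1) - y n‖ ^ 2)) ∧
    (∃ n₀ : ℕ, ∀ n ≥ n₀, ‖x (n + 1) - p‖ ^ 2 ≤ ‖x n - p‖ ^ 2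
        - κ * (‖x n - y n‖ ^ 2 + ‖x (n + 1) - y n‖ ^ 2)) ∧
    (∃ c : ℝ, Tendsto (fun n => ‖x n - p‖) atTop (nhds c)) ∧
    (∃ R : ℝ, ∀ n, ‖x n‖ ≤ R) ∧
    Tendsto (fun n => ‖x n - y n‖) atTop (nhds 0) ∧
    Tendsto (fun n => ‖x (n + 1) - y n‖) atTop (nhds 0) := by

  obtain ⟨hμ0, hμ1⟩ := hμ
  obtain ⟨hκ0, hκ1⟩ := hκ
  -- Part 1
  have part1 : ∀ n : ℕ, ‖x (n + 1) - p‖ ^ 2 ≤ ‖x n - p‖ ^ 2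
      - (1 - μ * lam n / lam (n + 1)) * (‖x n - y n‖ ^ 2 + ‖x (n + 1) - y n‖ ^ 2) := by
    intro n
    have hfy : f (y n) p ≤ 0 := hpseudo p hp (y n) (hy n) (hsol (y n) (hy n))
    have h := hkey p hp n
    nlinarith [hlampos n]
  refine ⟨part1, ?_⟩
  -- eventual coefficient bound
  have hratio : Tendsto (fun n => μ * lam n / lam (n + 1)) atTop (nhds μ) := by
    have h1 : Tendsto (fun n => lam (n + 1)) atTop (nhds l) :=
      hlamconv.comp (tendsto_add_atTop_nat 1)
    have h2 := (hlamconv.div h1 hl.ne').const_mul μ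
    rw [div_self hl.ne', mul_one] at h2
    exact h2.congr fun n => (mul_div_assoc μ (lam n) (lam (n + 1))).symm
  have hev : ∀ᶠ n in atTop, μ * lam n / lam (n + 1) < 1 - κ :=
    hratio.eventually_lt_const (by linarith)
  obtain ⟨n₀, hn₀⟩ := eventually_atTop.mp hev
  have part2 : ∀ n ≥ n₀, ‖x (n + 1) - p‖ ^ 2 ≤ ‖x n - p‖ ^ 2
      - κ * (‖x n - y n‖ ^ 2 + ‖x (n + 1) - y n‖ ^ 2) := by
    intro n hn
    have h := part1 n
    have hc := hn₀ n hn
    nlinarith [sq_nonneg ‖x n - y n‖, sq_nonneg ‖x (n + 1) - y n‖]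
  refine ⟨⟨n₀, part2⟩, ?_⟩
  set a : ℕ → ℝ := fun n => ‖x n - p‖ ^ 2 with ha_def
  have ha_nonneg : ∀ n, 0 ≤ a n := fun n => sq_nonneg _
  have hdec : ∀ n ≥ n₀, a (n + 1) ≤ a n := by
    intro n hn
    have h := part2 n hn
    have hnn : 0 ≤ κ * (‖x n - y n‖ ^ 2 + ‖x (n + 1) - y n‖ ^ 2) :=
      mul_nonneg hκ0.le (add_nonneg (sq_nonneg _) (sq_nonneg _))
    simp only [ha_def]
    linarith
  -- convergence of a
  set b : ℕ → ℝ := fun n => a (n + n₀) with hb_def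
  have hbanti : Antitone b := by
    apply antitone_nat_of_succ_le
    intro k
    have := hdec (k + n₀) (Nat.le_add_left _ _)
    simpa [hb_def, add_right_comm] using this
  have hbdd : BddBelow (Set.range b) := ⟨0, by rintro _ ⟨k, rfl⟩; exact ha_nonneg _⟩
  have hbconv : Tendsto b atTop (nhds (⨅ n, b n)) := tendsto_atTop_ciInf hbanti hbdd
  have haconv : Tendsto a atTop (nhds (⨅ n, b n)) :=
    (tendsto_add_atTop_iff_nat n₀).mp hbconv
  set c := ⨅ n, b n with hc_def
  have hnormconv : Tendsto (fun n => ‖x n - p‖) atTop (nhds (Real.sqrt c)) := by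
    have := haconv.sqrt
    simpa [ha_def, Real.sqrt_sq (norm_nonneg _)] using this
  refine ⟨⟨Real.sqrt c, hnormconv⟩, ?_⟩
  -- boundedness
  obtain ⟨M, hM⟩ := hnormconv.bddAbove_range
  have hbound : ∀ n, ‖x n‖ ≤ M + ‖p‖ := by
    intro n
    have h1 : ‖x n - p‖ ≤ M := hM ⟨n, rfl⟩
    have := norm_sub_norm_le (x n) p
    linarith
  refine ⟨⟨M + ‖p‖, hbound⟩, ?_⟩
  -- vanishing
  have hdiff : Tendsto (fun n => a n - a (n + 1)) atTop (nhds 0) := by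
    have h1 : Tendsto (fun n => a (n + 1)) atTop (nhds c) :=
      haconv.comp (tendsto_add_atTop_nat 1)
    simpa using haconv.sub h1
  set A : ℕ → ℝ := fun n => ‖x n - y n‖ ^ 2 with hA_def
  set B : ℕ → ℝ := fun n => ‖x (n + 1) - y n‖ ^ 2 with hB_def
  have hA0 : ∀ n, 0 ≤ A n := fun n => sq_nonneg _
  have hB0 : ∀ n, 0 ≤ B n := fun n => sq_nonneg _
  have hAB0 : ∀ n, 0 ≤ A n + B n := fun n => add_nonneg (hA0 n) (hB0 n)
  have hκAB : Tendsto (fun n => κ * (A n + B n)) atTop (nhds 0) := by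
    apply squeeze_zero' (Eventually.of_forall fun n => mul_nonneg hκ0.le (hAB0 n)) ?_ hdiff
    filter_upwards [eventually_atTop.mpr ⟨n₀, fun n hn => part2 n hn⟩] with n h
    simp only [ha_def, hA_def, hB_def]
    linarith [h]
  have hAB : Tendsto (fun n => A n + B n) atTop (nhds 0) := by
    have := hκAB.const_mul κ⁻¹
    simpa [inv_mul_cancel_left₀ hκ0.ne'] using this
  have hA : Tendsto A atTop (nhds 0) :=
    squeeze_zero hA0 (fun n => by linarith [hB0 n]) hAB
  have hB : Tendsto B atTop (nhds 0) :=
    squeeze_zero hB0 (fun n => by linarith [hA0 n]) hAB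
  constructor
  · have h := hA.sqrt
    rw [Real.sqrt_zero] at h
    exact h.congr fun n => Real.sqrt_sq (norm_nonneg _)
  · have h := hB.sqrt
    rw [Real.sqrt_zero] at h
    exact h.congr fun n => Real.sqrt_sq (norm_nonneg _)
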